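/- A group G is strongly bounded (every action of G by isometries on a metric space has bounded orbits) if and only if for every sequence {Z_m} of subsets of G satisfying Γ(Z_m) ⊆ Z_{m+1} and ∪_m Z_m = G, there exists m with Z_m = G, where Γ(Z) = Z ∪ {1} ∪ {g⁻¹ : g ∈ Z} ∪ {gh : g,h ∈ Z}. -/

import Mathlib

open Pointwise

/-- A group is strongly bounded if every action by isometries on a metric space
has bounded orbits. -/
def StronglyBounded (G : Type*) [Group G] : Prop :=
  ∀ (X : Type) [MetricSpace X] [MulAction G X],
    (∀ g : G, Isometry fun x : X => g • x) →
    ∀ x : X, Bornology.IsBounded (MulAction.orbit G x)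

/-- Γ(Z) = Z ∪ {1} ∪ Z⁻¹ ∪ Z·Z. -/
def GammaSet {G : Type*} [Group G] (Z : Set G) : Set G :=
  Z ∪ {1} ∪ Z⁻¹ ∪ Z * Z

theorem strongly_bounded_iff (G : Type) [Group G] :
    StronglyBounded G ↔
      ∀ Z : ℕ → Set G, (∀ m, GammaSet (Z m) ⊆ Z (m + 1)) →
        (⋃ m, Z m) = Set.univ → ∃ m, Z m = Set.univ := by
  classical
  constructor
  · -- strongly bounded → chain condition
    intro hSB Z hZ hU
    have hsub : ∀ m, Z m ⊆ Z (m + 1) := fun m g hg =>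
      hZ m (Or.inl (Or.inl (Or.inl hg)))
    have hmono : Monotone Z := monotone_nat_of_le_succ hsub
    have hex : ∀ g : G, ∃ m, g ∈ Z m := by
      intro g
      have : g ∈ ⋃ m, Z m := hU.symm ▸ Set.mem_univ g
      exact Set.mem_iUnion.mp this
    set ℓ : G → ℕ := fun g => Nat.find (hex g) with hℓ
    have hℓmem : ∀ g, g ∈ Z (ℓ g) := fun g => Nat.find_spec (hex g)
    have hℓle : ∀ {g m}, g ∈ Z m → ℓ g ≤ m := fun {g m} hm => Nat.find_le hm
    have hmul : ∀ a b : G, ℓ (a * b) ≤ max (ℓ a) (ℓ b) + 1 := by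
      intro a b
      apply hℓle
      apply hZ
      exact Or.inr (Set.mul_mem_mul (hmono (le_max_left _ _) (hℓmem a))
        (hmono (le_max_right _ _) (hℓmem b)))
    set L : G → ℝ := fun g => if g = 1 then 0 else ((ℓ g : ℝ) + 1) with hLdef
    have hL0 : ∀ g, 0 ≤ L g := by
      intro g
      simp only [hLdef]
      split
      · exact le_refl 0
      · positivity
    have hL1 : L 1 = 0 := by simp [hLdef]
    have hLpos : ∀ g, g ≠ 1 → L g = (ℓ g : ℝ) + 1 := by
      intro g hg; simp [hLdef, hg]
    have hLsub : ∀ a b : G, L (a * b) ≤ L a + L b := by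
      intro a b
      by_cases ha : a = 1
      · simp [ha, hL1]
      by_cases hb : b = 1
      · simp [hb, hL1]
      by_cases hab : a * b = 1
      · rw [hab, hL1]; exact add_nonneg (hL0 a) (hL0 b)
      rw [hLpos _ hab, hLpos _ ha, hLpos _ hb]
      have h1 : ℓ (a * b) ≤ max (ℓ a) (ℓ b) + 1 := hmul a b
      have h2 : max (ℓ a) (ℓ b) ≤ ℓ a + ℓ b := max_le (Nat.le_add_right _ _) (Nat.le_add_left _ _)
      have : (ℓ (a * b) : ℝ) ≤ (ℓ a : ℝ) + (ℓ b : ℝ) + 1 := by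
        have := h1.trans (Nat.add_le_add_right h2 1)
        exact_mod_cast this
      linarith
    have hLzero : ∀ g, L g = 0 → g = 1 := by
      intro g hg
      by_contra h
      rw [hLpos g h] at hg
      have : (0:ℝ) ≤ (ℓ g : ℝ) := Nat.cast_nonneg _
      linarith
    set d : G → G → ℝ := fun g h => L (g⁻¹ * h) + L (h⁻¹ * g) with hd
    letI MS : MetricSpace G :=
      { dist := d
        dist_self := by
          intro g
          simp [hd, hL1]
        dist_comm := by
          intro g h
          simp only [hd]
          ring
        dist_triangle := by
          intro g h k
          simp only [hd]
          have e1 : g⁻¹ * k = (g⁻¹ * h) * (h⁻¹ * k) := by group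
          have e2 : k⁻¹ * g = (k⁻¹ * h) * (h⁻¹ * g) := by group
          rw [e1, e2]
          have t1 := hLsub (g⁻¹ * h) (h⁻¹ * k)
          have t2 := hLsub (k⁻¹ * h) (h⁻¹ * g)
          linarith
        eq_of_dist_eq_zero := by
          intro g h hgh
          simp only [hd] at hgh
          have h1 : L (g⁻¹ * h) = 0 := by
            have := hL0 (g⁻¹ * h); have := hL0 (h⁻¹ * g); linarith
          have := hLzero _ h1
          have : g⁻¹ * h = 1 := this
          exact (inv_mul_eq_one.mp this) }
    have hiso : ∀ g : G, Isometry fun x : G => g • x := by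
      intro g
      apply Isometry.of_dist_eq
      intro a b
      show d (g • a) (g • b) = d a b
      simp only [hd, smul_eq_mul]
      have e1 : (g * a)⁻¹ * (g * b) = a⁻¹ * b := by group
      have e2 : (g * b)⁻¹ * (g * a) = b⁻¹ * a := by group
      rw [e1, e2]
    have hbdd := hSB G hiso 1
    rw [Metric.isBounded_iff_subset_closedBall (1 : G)] at hbdd
    obtain ⟨r, hr⟩ := hbdd
    have hdistle : ∀ g : G, L g ≤ r := by
      intro g
      have hg : g ∈ MulAction.orbit G (1 : G) := ⟨g, by simp⟩
      have := hr hg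
      rw [Metric.mem_closedBall] at this
      have hdg : dist g (1 : G) = L (g⁻¹ * 1) + L (1⁻¹ * g) := rfl
      rw [hdg] at this
      simp only [mul_one, one_mul, inv_one] at this
      have := hL0 g⁻¹
      linarith
    refine ⟨⌈r⌉₊ + 1, Set.eq_univ_of_forall fun g => ?_⟩
    by_cases hg : g = 1
    · subst hg
      exact hZ _ (Or.inl (Or.inl (Or.inr rfl)))
    · have h1 : (ℓ g : ℝ) + 1 ≤ r := by rw [← hLpos g hg]; exact hdistle g
      have h2 : (ℓ g : ℝ) ≤ (⌈r⌉₊ : ℝ) := by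
        have := Nat.le_ceil r
        linarith
      have h3 : ℓ g ≤ ⌈r⌉₊ := by exact_mod_cast h2
      exact hmono (h3.trans (Nat.le_succ _)) (hℓmem g)
  · -- chain condition → strongly bounded
    intro hC X _ _ hiso x
    set Z : ℕ → Set G := fun m => {g : G | dist x (g • x) ≤ 2 ^ m} with hZdef
    have hGam : ∀ m, GammaSet (Z m) ⊆ Z (m + 1) := by
      intro m g hg
      have h2 : (2:ℝ) ^ m ≤ 2 ^ (m+1) := by
        apply pow_le_pow_right₀ <;> norm_num
      rcases hg with ((hg | hg) | hg) | hg
      · exact le_trans hg h2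
      · rcases hg with rfl
        show dist x ((1:G) • x) ≤ _
        simp
      · -- g ∈ (Z m)⁻¹
        have hg' : g⁻¹ ∈ Z m := hg
        show dist x (g • x) ≤ _
        have : dist (g • x) (g • (g⁻¹ • x)) = dist x (g⁻¹ • x) := (hiso g).dist_eq _ _
        rw [smul_inv_smul] at this
        calc dist x (g • x) = dist (g • x) x := dist_comm _ _
          _ = dist x (g⁻¹ • x) := this
          _ ≤ 2 ^ m := hg'
          _ ≤ 2 ^ (m+1) := h2
      · rcases hg with ⟨a, ha, b, hb, rfl⟩
        show dist x ((a * b) • x) ≤ _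
        have key : dist (a • x) ((a * b) • x) = dist x (b • x) := by
          rw [mul_smul]
          exact (hiso a).dist_eq _ _
        calc dist x ((a * b) • x) ≤ dist x (a • x) + dist (a • x) ((a * b) • x) :=
              dist_triangle _ _ _
          _ = dist x (a • x) + dist x (b • x) := by rw [key]
          _ ≤ 2 ^ m + 2 ^ m := add_le_add ha hb
          _ = 2 ^ (m+1) := by ring
    have hUn : (⋃ m, Z m) = Set.univ := by
      apply Set.eq_univ_of_forall
      intro g
      apply Set.mem_iUnion.mpr
      refine ⟨⌈dist x (g • x)⌉₊, ?_⟩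
      show dist x (g • x) ≤ (2:ℝ) ^ ⌈dist x (g • x)⌉₊
      calc dist x (g • x) ≤ (⌈dist x (g • x)⌉₊ : ℝ) := Nat.le_ceil _
        _ ≤ 2 ^ ⌈dist x (g • x)⌉₊ := by
            exact_mod_cast (Nat.lt_two_pow_self (n := ⌈dist x (g • x)⌉₊)).le
    obtain ⟨m, hm⟩ := hC Z hGam hUn
    apply Bornology.IsBounded.subset (Metric.isBounded_closedBall (x := x) (r := 2 ^ m))
    rintro y ⟨g, rfl⟩
    have hg : g ∈ Z m := hm ▸ Set.mem_univ g
    rw [Metric.mem_closedBall, dist_comm]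
    exact hg
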